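/- Let $s \in (0,1)$, $r \ge 2^{3/s}$, $\ell(t) := (r-t)^{-2s}$ and $\gamma_r := [\ell(r-1) - \ell(r/2) - \ell'(r/2)(r/2-1)]^{-1}$. Define $h : [0,\infty) \to [0,1]$ by $h(t) = 0$ for $t \in [0, r/2)$, $h(t) = \gamma_r(\ell(t) - \ell(r/2) - \ell'(r/2)(t - r/2))$ for $t \in [r/2, r-1)$, and $h(t) = 1$ for $t \ge r-1$. Then $h$ is $C^{1,1}$ on $[0, r-1]$, $h(r/2) = 0$, $h'(r/2) = 0$, $h(r-1) = 1$, and for all $t \in (r/2, r-1)$ one has $|h'(t)| \le 4(r-t)^{-2s-1}$ and $|h''(t)| \le 12(r-t)^{-2s-2}$. -/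

import Mathlib

open Set

noncomputable section

/-- `ℓ(t) = (r-t)^{-2s}`. -/
def ell (s r t : ℝ) : ℝ := (r - t) ^ (-(2*s))

/-- `ℓ'(t) = 2s (r-t)^{-2s-1}`. -/
def ellD (s r t : ℝ) : ℝ := 2*s*(r - t) ^ (-(2*s) - 1)

/-- The normalization constant `γ_r`. -/
def gammaR (s r : ℝ) : ℝ :=
  (ell s r (r - 1) - ell s r (r/2) - ellD s r (r/2) * (r/2 - 1))⁻¹

/-- The barrier profile `h`. -/
def hBar (s r t : ℝ) : ℝ :=
  if t < r/2 then 0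
  else if t < r - 1 then
    gammaR s r * (ell s r t - ell s r (r/2) - ellD s r (r/2) * (t - r/2))
  else 1

/-- The derivative of `h` on `[0, r-1]`. -/
def hBarD (s r t : ℝ) : ℝ :=
  if t ≤ r/2 then 0 else gammaR s r * (ellD s r t - ellD s r (r/2))

set_option maxHeartbeats 1000000 in
/-- properties of the profile `h`: it is `C^{1,1}` on `[0, r-1]`, takes
values in `[0,1]`, satisfies `h(r/2)=0`, `h'(r/2)=0`, `h(r-1)=1`, and enjoys the
pointwise derivative bounds `|h'| ≤ 4(r-t)^{-2s-1}`, `|h''| ≤ 12(r-t)^{-2s-2}`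
on `(r/2, r-1)`. -/
theorem statement_11 (s r : ℝ) (hs : s ∈ Set.Ioo (0 : ℝ) 1) (hr : (2 : ℝ) ^ (3 / s) ≤ r) :
    hBar s r (r/2) = 0 ∧ hBar s r (r - 1) = 1 ∧ hBarD s r (r/2) = 0 ∧
    (∀ t, 0 ≤ hBar s r t ∧ hBar s r t ≤ 1) ∧
    (∀ t ∈ Icc (0 : ℝ) (r - 1),
      HasDerivWithinAt (hBar s r) (hBarD s r t) (Icc (0 : ℝ) (r - 1)) t) ∧
    (∃ L : NNReal, LipschitzOnWith L (hBarD s r) (Icc (0 : ℝ) (r - 1))) ∧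
    (∀ t ∈ Ioo (r/2) (r - 1),
      |hBarD s r t| ≤ 4 * (r - t) ^ (-(2*s) - 1) ∧
      ∃ d : ℝ, HasDerivAt (hBarD s r) d t ∧ |d| ≤ 12 * (r - t) ^ (-(2*s) - 2)) := by
  obtain ⟨hs0, hs1⟩ := hs
  -- basic size facts
  have hr8 : (8:ℝ) ≤ r := by
    have h3 : (3:ℝ) ≤ 3/s := by rw [le_div_iff₀ hs0]; nlinarith
    have h8 : (2:ℝ) ^ (3:ℝ) ≤ (2:ℝ) ^ (3/s) := Real.rpow_le_rpow_of_exponent_le one_le_two h3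
    have he : (2:ℝ) ^ (3:ℝ) = 8 := by
      rw [show (3:ℝ) = ((3:ℕ):ℝ) by norm_num, Real.rpow_natCast]; norm_num
    linarith
  have hhalf : r/2 < r - 1 := by linarith
  have hhalfpos : (0:ℝ) < r/2 := by linarith
  have hhalf0 : (0:ℝ) ≤ r/2 := by linarith
  have hhalf1 : r/2 ≤ r - 1 := le_of_lt hhalf
  -- ℓ(r/2) ≤ 1/16
  have hA : ell s r (r/2) ≤ 1/16 := by
    show (r - r/2) ^ (-(2*s)) ≤ 1/16
    rw [show r - r/2 = r/2 by ring]
    have hb : (0:ℝ) < 2 ^ (3/s - 1) := Real.rpow_pos_of_pos two_pos _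
    have h1 : (2:ℝ) ^ (3/s - 1) ≤ r/2 := by
      rw [Real.rpow_sub two_pos, Real.rpow_one]; linarith
    have h2 : (r/2) ^ (-(2*s)) ≤ ((2:ℝ) ^ (3/s - 1)) ^ (-(2*s)) :=
      Real.rpow_le_rpow_of_nonpos hb h1 (by nlinarith)
    have h3 : ((2:ℝ) ^ (3/s - 1)) ^ (-(2*s)) = (2:ℝ) ^ ((3/s - 1) * (-(2*s))) :=
      (Real.rpow_mul (by norm_num) _ _).symm
    have h4 : (3/s - 1) * (-(2*s)) = 2*s - 6 := by field_simp; ring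
    have h5 : (2:ℝ) ^ (2*s - 6) ≤ ((2:ℝ) ^ ((-4:ℤ):ℝ) : ℝ) :=
      Real.rpow_le_rpow_of_exponent_le one_le_two (by push_cast; linarith)
    have h6 : (2:ℝ) ^ ((-4:ℤ):ℝ) = 1/16 := by rw [Real.rpow_intCast]; norm_num
    rw [h3, h4] at h2; rw [h6] at h5; linarith
  have hA0 : 0 ≤ ell s r (r/2) := Real.rpow_nonneg (by linarith) _
  -- tangent term bounds
  have hBsplit : ellD s r (r/2) * (r/2 - 1)
      = 2*s * ell s r (r/2) * ((r/2)⁻¹ * (r/2 - 1)) := by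
    show 2*s*(r - r/2) ^ (-(2*s) - 1) * (r/2 - 1) = _
    rw [show r - r/2 = r/2 by ring, show -(2*s) - 1 = -(2*s) + (-1) by ring,
      Real.rpow_add hhalfpos, Real.rpow_neg_one]
    show _ = 2*s * (r - r/2) ^ (-(2*s)) * _
    rw [show r - r/2 = r/2 by ring]; ring
  have hfrac0 : 0 ≤ (r/2)⁻¹ * (r/2 - 1) :=
    mul_nonneg (inv_nonneg.mpr hhalf0) (by linarith)
  have hfrac1 : (r/2)⁻¹ * (r/2 - 1) ≤ 1 := by
    rw [inv_mul_le_iff₀ hhalfpos]; linarith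
  have hB1 : ellD s r (r/2) * (r/2 - 1) ≤ 1/8 := by
    rw [hBsplit]
    have h1 : 2*s * ell s r (r/2) * ((r/2)⁻¹ * (r/2 - 1)) ≤ 2*s * ell s r (r/2) * 1 :=
      mul_le_mul_of_nonneg_left hfrac1 (by positivity)
    nlinarith
  have hB0 : 0 ≤ ellD s r (r/2) * (r/2 - 1) := by
    rw [hBsplit]; exact mul_nonneg (by positivity) hfrac0
  -- ℓ(r-1) = 1
  have hell1 : ell s r (r - 1) = 1 := by
    show (r - (r-1)) ^ (-(2*s)) = 1
    rw [show r - (r-1) = 1 by ring, Real.one_rpow]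
  -- the denominator D
  set D : ℝ := ell s r (r - 1) - ell s r (r/2) - ellD s r (r/2) * (r/2 - 1) with hDdef
  have hgam : gammaR s r = D⁻¹ := rfl
  clear_value D
  have hDlb : 1/2 ≤ D := by rw [hDdef, hell1]; linarith
  have hDpos : 0 < D := by linarith
  have hDne : D ≠ 0 := ne_of_gt hDpos
  have hgpos : 0 < gammaR s r := by rw [hgam]; exact inv_pos.mpr hDpos
  have hg2 : gammaR s r ≤ 2 := by
    rw [hgam]
    calc D⁻¹ ≤ (1/2:ℝ)⁻¹ := by
          apply inv_anti₀ (by norm_num) hDlb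
      _ = 2 := by norm_num
  have hgD : gammaR s r * D = 1 := by rw [hgam]; exact inv_mul_cancel₀ hDne
  -- monotonicity and nonnegativity of ellD on (-∞, r-1]
  have hmono : ∀ x y : ℝ, x ≤ y → y ≤ r - 1 → ellD s r x ≤ ellD s r y := by
    intro x y hxy hy
    have hry : (0:ℝ) < r - y := by linarith
    have h := Real.rpow_le_rpow_of_nonpos hry (by linarith : r - y ≤ r - x)
      (by nlinarith : -(2*s) - 1 ≤ 0)
    have h2s : (0:ℝ) ≤ 2*s := by linarith
    exact mul_le_mul_of_nonneg_left h h2s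
  have hellDnn : ∀ x : ℝ, x ≤ r - 1 → 0 ≤ ellD s r x := by
    intro x hx
    exact mul_nonneg (by linarith) (Real.rpow_nonneg (by linarith) _)
  -- derivatives of ell and ellD
  have hdEll : ∀ t : ℝ, t < r → HasDerivAt (ell s r) (ellD s r t) t := by
    intro t ht
    have hne : r - t ≠ 0 := by intro h; linarith [sub_eq_zero.mp h]
    have h1 : HasDerivAt (fun u : ℝ => r - u) (-1) t := (hasDerivAt_id t).const_sub r
    have h2 := h1.rpow_const (p := -(2*s)) (Or.inl hne)
    convert h2 using 1
    show 2*s*(r - t) ^ (-(2*s) - 1) = _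
    ring
    exact rfl
  have hdEllD : ∀ t : ℝ, t < r →
      HasDerivAt (ellD s r) (2*s*((2*s+1) * (r - t) ^ (-(2*s) - 2))) t := by
    intro t ht
    have hne : r - t ≠ 0 := by intro h; linarith [sub_eq_zero.mp h]
    have h1 : HasDerivAt (fun u : ℝ => r - u) (-1) t := (hasDerivAt_id t).const_sub r
    have h2 := (h1.rpow_const (p := -(2*s) - 1) (Or.inl hne)).const_mul (2*s)
    refine h2.congr_deriv ?_
    rw [show -(2*s) - 1 - 1 = -(2*s) - 2 by ring]
    ring
  -- the smooth middle piece F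
  set F : ℝ → ℝ := fun t =>
    gammaR s r * (ell s r t - ell s r (r/2) - ellD s r (r/2) * (t - r/2)) with hFdef
  have hdF : ∀ t : ℝ, t < r →
      HasDerivAt F (gammaR s r * (ellD s r t - ellD s r (r/2))) t := by
    intro t ht
    have h1 := (((hdEll t ht).sub_const (ell s r (r/2))).sub
      (((hasDerivAt_id t).sub_const (r/2)).const_mul (ellD s r (r/2)))).const_mul (gammaR s r)
    refine h1.congr_deriv ?_
    ring
  have hF0 : F (r/2) = 0 := by rw [hFdef]; ring
  have hF1 : F (r - 1) = 1 := by
    rw [hFdef]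
    show gammaR s r * (ell s r (r-1) - ell s r (r/2) - ellD s r (r/2) * (r - 1 - r/2)) = 1
    rw [show r - 1 - r/2 = r/2 - 1 by ring, ← hDdef]
    exact hgD
  -- hBar agrees with F on [r/2, r-1] and with 0 on (-∞, r/2]
  have hBarF : ∀ x : ℝ, r/2 ≤ x → x ≤ r - 1 → hBar s r x = F x := by
    intro x h1 h2
    rcases lt_or_eq_of_le h2 with h2 | h2
    · show (if x < r/2 then (0:ℝ) else if x < r - 1 then _ else 1) = _
      rw [if_neg (not_lt.mpr h1), if_pos h2]
    · subst h2
      show (if r - 1 < r/2 then (0:ℝ) else if r - 1 < r - 1 then _ else 1) = _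
      rw [if_neg (not_lt.mpr hhalf1), if_neg (lt_irrefl _), hF1]
  have hBar0 : ∀ x : ℝ, x ≤ r/2 → hBar s r x = 0 := by
    intro x h1
    rcases lt_or_eq_of_le h1 with h1 | h1
    · exact if_pos h1
    · subst h1
      rw [hBarF _ le_rfl hhalf1, hF0]
  -- values
  have val1 : hBar s r (r/2) = 0 := hBar0 _ le_rfl
  have val2 : hBar s r (r - 1) = 1 := by rw [hBarF _ hhalf1 le_rfl, hF1]
  have val3 : hBarD s r (r/2) = 0 := if_pos le_rfl
  -- monotonicity of F on [r/2, r-1]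
  have hFmono : MonotoneOn F (Icc (r/2) (r - 1)) := by
    apply monotoneOn_of_deriv_nonneg (convex_Icc _ _)
    · intro x hx
      exact (hdF x (by rcases hx with ⟨_, h⟩; linarith)).continuousAt.continuousWithinAt
    · intro x hx
      rw [interior_Icc] at hx
      exact (hdF x (by linarith [hx.2])).differentiableAt.differentiableWithinAt
    · intro x hx
      rw [interior_Icc] at hx
      rw [(hdF x (by linarith [hx.2])).deriv]
      have := hmono (r/2) x hx.1.le hx.2.le
      nlinarith
  -- range
  have hrange : ∀ t : ℝ, 0 ≤ hBar s r t ∧ hBar s r t ≤ 1 := by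
    intro t
    rcases lt_or_ge t (r/2) with h | h
    · rw [hBar0 t h.le]; norm_num
    · rcases lt_or_ge t (r - 1) with h2 | h2
      · rw [hBarF t h h2.le]
        have m1 := hFmono ⟨le_rfl, hhalf1⟩ ⟨h, h2.le⟩ h
        have m2 := hFmono ⟨h, h2.le⟩ ⟨hhalf1, le_rfl⟩ h2.le
        rw [hF0] at m1; rw [hF1] at m2
        exact ⟨m1, m2⟩
      · have : hBar s r t = 1 := by
          show (if t < r/2 then (0:ℝ) else if t < r - 1 then _ else 1) = 1
          rw [if_neg (not_lt.mpr h), if_neg (not_lt.mpr h2)]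
        rw [this]; norm_num
  -- derivative within Icc
  have hIcc : Icc (0:ℝ) (r/2) ∪ Icc (r/2) (r - 1) = Icc (0:ℝ) (r - 1) :=
    Set.Icc_union_Icc_eq_Icc hhalf0 hhalf1
  have hderiv : ∀ t ∈ Icc (0:ℝ) (r - 1),
      HasDerivWithinAt (hBar s r) (hBarD s r t) (Icc (0:ℝ) (r - 1)) t := by
    intro t ht
    rcases lt_trichotomy t (r/2) with h | h | h
    · -- left of r/2 : locally constant 0
      have he : hBar s r =ᶠ[nhds t] (fun _ => (0:ℝ)) := by
        filter_upwards [isOpen_Iio.mem_nhds h] with x hx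
        exact hBar0 x (le_of_lt hx)
      have : HasDerivAt (hBar s r) 0 t :=
        (hasDerivAt_const t (0:ℝ)).congr_of_eventuallyEq he
      have hz : hBarD s r t = 0 := if_pos h.le
      rw [hz]
      exact this.hasDerivWithinAt
    · -- at r/2 : glue
      subst h
      have hz : hBarD s r (r/2) = 0 := if_pos le_rfl
      rw [hz]
      have hleft : HasDerivWithinAt (hBar s r) 0 (Icc (0:ℝ) (r/2)) (r/2) := by
        refine (hasDerivWithinAt_const (r/2) _ (0:ℝ)).congr ?_ val1
        intro x hx
        exact hBar0 x hx.2
      have hFd : HasDerivAt F 0 (r/2) := by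
        have := hdF (r/2) (by linarith)
        simpa using this
      have hright : HasDerivWithinAt (hBar s r) 0 (Icc (r/2) (r - 1)) (r/2) := by
        refine hFd.hasDerivWithinAt.congr ?_ (by rw [val1, hF0])
        intro x hx
        exact hBarF x hx.1 hx.2
      have := hleft.union hright
      rwa [hIcc] at this
    · -- right of r/2
      have hz : hBarD s r t = gammaR s r * (ellD s r t - ellD s r (r/2)) :=
        if_neg (not_le.mpr h)
      rw [hz]
      have hFd := (hdF t (by linarith [ht.2])).hasDerivWithinAt (s := Icc (0:ℝ) (r-1))
      refine hFd.congr_of_eventuallyEq ?_ (hBarF t h.le ht.2)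
      filter_upwards [mem_nhdsWithin_of_mem_nhds (isOpen_Ioi.mem_nhds h),
        self_mem_nhdsWithin] with x hx1 hx2
      exact hBarF x (le_of_lt hx1) hx2.2
  -- Lipschitz
  have hpsi : ∀ x ∈ Icc (0:ℝ) (r - 1),
      HasDerivWithinAt (fun u => gammaR s r * (ellD s r u - ellD s r (r/2)))
        (gammaR s r * (2*s*((2*s+1) * (r - x) ^ (-(2*s) - 2)))) (Icc (0:ℝ) (r - 1)) x := by
    intro x hx
    exact (((hdEllD x (by linarith [hx.2])).sub_const
      (ellD s r (r/2))).const_mul (gammaR s r)).hasDerivWithinAt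
  have hpow_le_one : ∀ x : ℝ, x ∈ Icc (0:ℝ) (r-1) → (r - x) ^ (-(2*s) - 2) ≤ 1 := by
    intro x hx
    exact Real.rpow_le_one_of_one_le_of_nonpos (by linarith [hx.2]) (by nlinarith)
  have hdbound : ∀ x ∈ Icc (0:ℝ) (r - 1),
      ‖gammaR s r * (2*s*((2*s+1) * (r - x) ^ (-(2*s) - 2)))‖₊ ≤ (12 : NNReal) := by
    intro x hx
    rw [← NNReal.coe_le_coe, coe_nnnorm, Real.norm_eq_abs]
    have hp0 : (0:ℝ) ≤ (r - x) ^ (-(2*s) - 2) := Real.rpow_nonneg (by linarith [hx.2]) _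
    have hp1 := hpow_le_one x hx
    rw [abs_of_nonneg (by positivity)]
    have hc : (↑(12:NNReal) : ℝ) = 12 := by norm_num
    rw [hc]
    have k4 : 2*s*(2*s+1) ≤ 2*3 := mul_le_mul (by linarith) (by linarith)
      (by linarith) (by norm_num)
    have k5 : gammaR s r * (2*s*(2*s+1)) ≤ 12 := by
      nlinarith [mul_le_mul hg2 k4 (by positivity) (by norm_num : (0:ℝ) ≤ 2)]
    have k6 : gammaR s r * (2*s*((2*s+1) * (r - x) ^ (-(2*s) - 2)))
        = (gammaR s r * (2*s*(2*s+1))) * (r - x) ^ (-(2*s) - 2) := by ring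
    rw [k6]
    calc (gammaR s r * (2*s*(2*s+1))) * (r - x) ^ (-(2*s) - 2)
        ≤ 12 * (r - x) ^ (-(2*s) - 2) := mul_le_mul_of_nonneg_right k5 hp0
      _ ≤ 12 := by linarith
  have hpsilip : LipschitzOnWith 12 (fun u => gammaR s r * (ellD s r u - ellD s r (r/2)))
      (Icc (0:ℝ) (r - 1)) :=
    (convex_Icc _ _).lipschitzOnWith_of_nnnorm_hasDerivWithin_le hpsi hdbound
  have heqmax : ∀ x ∈ Icc (0:ℝ) (r - 1),
      hBarD s r x = max (gammaR s r * (ellD s r x - ellD s r (r/2))) 0 := by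
    intro x hx
    rcases le_or_gt x (r/2) with h | h
    · have hz : hBarD s r x = 0 := if_pos h
      rw [hz, max_eq_right]
      have := hmono x (r/2) h hhalf1
      nlinarith
    · have hz : hBarD s r x = gammaR s r * (ellD s r x - ellD s r (r/2)) :=
        if_neg (not_le.mpr h)
      rw [hz, max_eq_left]
      have := hmono (r/2) x h.le hx.2
      nlinarith
  have hlip : LipschitzOnWith 12 (hBarD s r) (Icc (0:ℝ) (r - 1)) := by
    rw [lipschitzOnWith_iff_dist_le_mul]
    intro x hx y hy
    rw [heqmax x hx, heqmax y hy, Real.dist_eq]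
    calc |max (gammaR s r * (ellD s r x - ellD s r (r/2))) 0
            - max (gammaR s r * (ellD s r y - ellD s r (r/2))) 0|
          ≤ |gammaR s r * (ellD s r x - ellD s r (r/2))
            - gammaR s r * (ellD s r y - ellD s r (r/2))| := abs_max_sub_max_le_abs _ _ _
      _ = dist (gammaR s r * (ellD s r x - ellD s r (r/2)))
            (gammaR s r * (ellD s r y - ellD s r (r/2))) := (Real.dist_eq _ _).symm
      _ ≤ 12 * dist x y := lipschitzOnWith_iff_dist_le_mul.mp hpsilip x hx y hy
  -- pointwise bounds
  have hbounds : ∀ t ∈ Ioo (r/2) (r - 1),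
      |hBarD s r t| ≤ 4 * (r - t) ^ (-(2*s) - 1) ∧
      ∃ d : ℝ, HasDerivAt (hBarD s r) d t ∧ |d| ≤ 12 * (r - t) ^ (-(2*s) - 2) := by
    intro t ht
    obtain ⟨ht1, ht2⟩ := ht
    have hz : hBarD s r t = gammaR s r * (ellD s r t - ellD s r (r/2)) :=
      if_neg (not_le.mpr ht1)
    constructor
    · rw [hz, abs_of_nonneg (by nlinarith [hmono (r/2) t ht1.le ht2.le])]
      have h1 : ellD s r t - ellD s r (r/2) ≤ ellD s r t := by
        have := hellDnn (r/2) hhalf1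
        linarith
      have h2 : gammaR s r * (ellD s r t - ellD s r (r/2)) ≤ gammaR s r * ellD s r t :=
        mul_le_mul_of_nonneg_left h1 hgpos.le
      have hq0 : (0:ℝ) ≤ (r - t) ^ (-(2*s) - 1) := Real.rpow_nonneg (by linarith) _
      have h3 : gammaR s r * ellD s r t ≤ 4 * (r - t) ^ (-(2*s) - 1) := by
        show gammaR s r * (2*s*(r - t) ^ (-(2*s) - 1)) ≤ _
        nlinarith [mul_le_mul_of_nonneg_left
          (mul_le_mul_of_nonneg_right (by linarith : 2*s ≤ 2) hq0) hgpos.le]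
      linarith
    · refine ⟨gammaR s r * (2*s*((2*s+1) * (r - t) ^ (-(2*s) - 2))), ?_, ?_⟩
      · have hFd := ((hdEllD t (by linarith)).sub_const
          (ellD s r (r/2))).const_mul (gammaR s r)
        refine hFd.congr_of_eventuallyEq ?_
        filter_upwards [isOpen_Ioi.mem_nhds ht1] with x hx
        exact if_neg (not_le.mpr hx)
      · have hp0 : (0:ℝ) ≤ (r - t) ^ (-(2*s) - 2) := Real.rpow_nonneg (by linarith) _
        rw [abs_of_nonneg (by positivity)]
        have k4 : 2*s*(2*s+1) ≤ 2*3 := mul_le_mul (by linarith) (by linarith)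
          (by linarith) (by norm_num)
        have k5 : gammaR s r * (2*s*(2*s+1)) ≤ 12 := by
          nlinarith [mul_le_mul hg2 k4 (by positivity) (by norm_num : (0:ℝ) ≤ 2)]
        have k6 : gammaR s r * (2*s*((2*s+1) * (r - t) ^ (-(2*s) - 2)))
            = (gammaR s r * (2*s*(2*s+1))) * (r - t) ^ (-(2*s) - 2) := by ring
        rw [k6]
        exact mul_le_mul_of_nonneg_right k5 hp0
  exact ⟨val1, val2, val3, hrange, hderiv, ⟨12, hlip⟩, hbounds⟩



end
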